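/- Let R be a noetherian ring, S a noetherian flat R-algebra, and M a finite R-module. If M is a reflexive R-module (the natural double-dual map M → Hom_R(Hom_R(M,R),R) is an isomorphism), then S ⊗_R M is a reflexive S-module. -/
import Mathlib

open TensorProduct Function Module

section Theta

variable (R S : Type*) [CommRing R] [CommRing S] [Algebra R S]

/-- The natural base-change comparison map `S ⊗[R] N* → (S ⊗[R] N)*`. -/
noncomputable def thetaBC (N : Type*) [AddCommGroup N] [Module R N] :
    S ⊗[R] (Module.Dual R N) →ₗ[S] Module.Dual S (S ⊗[R] N) :=
  LinearMap.liftBaseChange S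
    (((LinearMap.liftBaseChangeEquiv S :
        (N →ₗ[R] S) ≃ₗ[S] (S ⊗[R] N →ₗ[S] S)).toLinearMap.restrictScalars R) ∘ₗ
      LinearMap.llcomp R N R S (Algebra.linearMap R S))

variable {R S}

@[simp] lemma thetaBC_tmul {N : Type*} [AddCommGroup N] [Module R N]
    (s t : S) (f : Module.Dual R N) (n : N) :
    thetaBC R S N (s ⊗ₜ f) (t ⊗ₜ n) = (s * t) * algebraMap R S (f n) := by
  simp [thetaBC, Algebra.smul_def, mul_assoc, mul_left_comm]

/-- Extensionality for `S`-linear maps out of `S ⊗[R] N`. -/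
lemma bc_ext {N P : Type*} [AddCommGroup N] [Module R N] [AddCommGroup P] [Module S P]
    {φ ψ : S ⊗[R] N →ₗ[S] P} (h : ∀ n, φ (1 ⊗ₜ n) = ψ (1 ⊗ₜ n)) : φ = ψ := by
  ext x
  induction x with
  | zero => simp
  | tmul s n =>
      have : (s ⊗ₜ n : S ⊗[R] N) = s • (1 ⊗ₜ n) := by simp [smul_tmul']
      rw [this, map_smul, map_smul, h]
  | add x y hx hy => simp [hx, hy]

lemma thetaBC_natural {N N' : Type*} [AddCommGroup N] [Module R N]
    [AddCommGroup N'] [Module R N'] (g : N →ₗ[R] N') (x : S ⊗[R] Module.Dual R N') :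
    thetaBC R S N (g.dualMap.baseChange S x) =
      (thetaBC R S N' x) ∘ₗ (g.baseChange S) := by
  induction x with
  | zero => simp
  | tmul s f =>
      refine bc_ext fun n => ?_
      simp
  | add x y hx hy => simp [map_add, hx, hy, LinearMap.add_comp]

/-- `thetaBC` is bijective for finite free modules `Fin n → R`. -/
lemma thetaBC_free_bijective (n : ℕ) :
    Function.Bijective (thetaBC R S (Fin n → R)) := by
  classical
  set F := Fin n → R
  -- explicit inverse
  let ψ : Module.Dual S (S ⊗[R] F) → S ⊗[R] Module.Dual R F := fun φ =>
    ∑ i : Fin n, φ (1 ⊗ₜ Pi.single i 1) ⊗ₜ (LinearMap.proj i : F →ₗ[R] R)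
  rw [Function.bijective_iff_has_inverse]
  refine ⟨ψ, ?_, ?_⟩
  · intro x
    induction x with
    | zero => simp [ψ]
    | tmul s f =>
        have hψ : ψ (thetaBC R S F (s ⊗ₜ f)) =
            ∑ i : Fin n, s ⊗ₜ (f (Pi.single i 1) • (LinearMap.proj i : F →ₗ[R] R)) := by
          refine Finset.sum_congr rfl fun i _ => ?_
          rw [thetaBC_tmul, mul_one, mul_comm, ← Algebra.smul_def, smul_tmul]
        rw [hψ, ← tmul_sum]
        congr 1
        ext x
        simp [Pi.single_apply, Finset.sum_ite_eq]
    | add x y hx hy =>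
        have : ψ (thetaBC R S F x + thetaBC R S F y) = ψ (thetaBC R S F x) + ψ (thetaBC R S F y) := by
          simp only [ψ, LinearMap.add_apply, add_tmul, Finset.sum_add_distrib]
        rw [map_add, this, hx, hy]
  · intro φ
    refine bc_ext fun x => ?_
    have hsum : (∑ i : Fin n, x i • (Pi.single i 1 : F)) = x := by
      ext j
      simp [Pi.single_apply]
    have hx : (1 ⊗ₜ x : S ⊗[R] F) = ∑ i : Fin n, x i • ((1 : S) ⊗ₜ (Pi.single i 1 : F)) := by
      conv_lhs => rw [← hsum]
      rw [tmul_sum]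
      exact Finset.sum_congr rfl fun i _ => by rw [tmul_smul]
    have : thetaBC R S F (ψ φ) (1 ⊗ₜ x) =
        ∑ i : Fin n, φ (1 ⊗ₜ Pi.single i 1) * algebraMap R S (x i) := by
      simp only [ψ, map_sum, LinearMap.sum_apply]
      refine Finset.sum_congr rfl fun i _ => ?_
      rw [thetaBC_tmul, mul_one]
      rfl
    rw [this, hx, map_sum]
    refine Finset.sum_congr rfl fun i _ => ?_
    rw [← algebraMap_smul S (x i) ((1 : S) ⊗ₜ (Pi.single i 1 : F)), map_smul, smul_eq_mul,
      mul_comm]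
end Theta

section DualExact

variable {A F G H : Type*} [CommRing A] [AddCommGroup F] [AddCommGroup G] [AddCommGroup H]
  [Module A F] [Module A G] [Module A H]

lemma dualMap_injective_of_surjective {g : G →ₗ[A] H} (hg : Surjective g) :
    Injective g.dualMap := by
  intro φ ψ h
  ext v
  obtain ⟨w, rfl⟩ := hg v
  exact congrFun (congrArg (fun (u : Module.Dual A G) => u.toFun) h) w

lemma dual_exact (f : F →ₗ[A] G) (g : G →ₗ[A] H) (hfg : Exact f g) (hg : Surjective g) :
    Exact g.dualMap f.dualMap := by
  rw [LinearMap.exact_iff]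
  apply le_antisymm
  · intro x hx
    -- x : Dual G with x ∘ f = 0; lift through the quotient
    have hker : LinearMap.ker g ≤ LinearMap.ker x := by
      rw [LinearMap.exact_iff] at hfg
      rw [hfg]
      rintro _ ⟨v, rfl⟩
      simpa using LinearMap.congr_fun (LinearMap.mem_ker.mp hx) v
    refine ⟨((LinearMap.ker g).liftQ x hker) ∘ₗ
      (g.quotKerEquivOfSurjective hg).symm.toLinearMap, ?_⟩
    ext v
    have : (g.quotKerEquivOfSurjective hg).symm (g v) =
        Submodule.Quotient.mk v := by
      apply (g.quotKerEquivOfSurjective hg).injective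
      simp [LinearMap.quotKerEquivOfSurjective, LinearMap.quotKerEquivRange]
    simp only [LinearMap.dualMap_apply, LinearMap.coe_comp, Function.comp_apply,
      LinearEquiv.coe_coe, this]
    rfl
  · rintro _ ⟨φ, rfl⟩
    simp only [LinearMap.mem_ker]
    ext v
    simp [hfg.apply_apply_eq_zero v]

end DualExact

section Main

variable (R S : Type*) [CommRing R] [IsNoetherianRing R] [CommRing S] [Algebra R S]
  [Module.Flat R S]

set_option maxHeartbeats 1000000 in
theorem thetaBC_bijective (M : Type*) [AddCommGroup M] [Module R M] [Module.Finite R M] :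
    Function.Bijective (thetaBC R S M) := by
  classical
  obtain ⟨n, p, hp⟩ := Module.Finite.exists_fin' R M
  obtain ⟨m, q, hq⟩ := Module.Finite.exists_fin' R (LinearMap.ker p)
  set g : (Fin m → R) →ₗ[R] (Fin n → R) := (LinearMap.ker p).subtype ∘ₗ q with hg
  have hexact : Exact g p := by
    rw [LinearMap.exact_iff, hg, LinearMap.range_comp, LinearMap.range_eq_top.mpr hq,
      Submodule.map_top, Submodule.range_subtype]
  -- dual sequence over R, base changed to S (exact by flatness)
  have hpD : Injective p.dualMap := dualMap_injective_of_surjective hp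
  have hD : Exact p.dualMap g.dualMap := dual_exact g p hexact hp
  have h1 : Injective (p.dualMap.baseChange S) := by
    have h := Module.Flat.lTensor_preserves_injective_linearMap (M := S) p.dualMap hpD
    rwa [← LinearMap.baseChange_eq_ltensor] at h
  have h2 : Exact (p.dualMap.baseChange S) (g.dualMap.baseChange S) := by
    have h := Module.Flat.lTensor_exact S hD
    rwa [← LinearMap.baseChange_eq_ltensor, ← LinearMap.baseChange_eq_ltensor] at h
  -- the base changed presentation of S ⊗ M
  have hpS : Surjective (p.baseChange S) := by
    have h := LinearMap.lTensor_surjective S hp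
    rwa [← LinearMap.baseChange_eq_ltensor] at h
  have hexactS : Exact (g.baseChange S) (p.baseChange S) := by
    have h := lTensor_exact S hexact hp
    rwa [← LinearMap.baseChange_eq_ltensor, ← LinearMap.baseChange_eq_ltensor] at h
  have hpSD : Injective (p.baseChange S).dualMap := dualMap_injective_of_surjective hpS
  have hDS : Exact (p.baseChange S).dualMap (g.baseChange S).dualMap :=
    dual_exact _ _ hexactS hpS
  have hθ0 := thetaBC_free_bijective (R := R) (S := S) n
  have hθ1 := thetaBC_free_bijective (R := R) (S := S) m
  constructor
  · -- injectivity
    rw [injective_iff_map_eq_zero]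
    intro x hx
    have h0 : thetaBC R S (Fin n → R) (p.dualMap.baseChange S x) = 0 := by
      rw [thetaBC_natural, hx, LinearMap.zero_comp]
    have : p.dualMap.baseChange S x = 0 := hθ0.injective (by rw [h0, map_zero])
    exact h1 (by rw [this, map_zero])
  · -- surjectivity
    intro φ
    obtain ⟨x, hx⟩ := hθ0.surjective (φ.comp (p.baseChange S))
    have hpg : p ∘ₗ g = 0 := LinearMap.ext fun v => hexact.apply_apply_eq_zero v
    have h0 : thetaBC R S (Fin m → R) (g.dualMap.baseChange S x) = 0 := by
      rw [thetaBC_natural, hx, LinearMap.comp_assoc, ← LinearMap.baseChange_comp, hpg,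
        LinearMap.baseChange_zero, LinearMap.comp_zero]
    have hx0 : g.dualMap.baseChange S x = 0 := hθ1.injective (by rw [h0, map_zero])
    obtain ⟨y, hy⟩ := (h2 x).mp hx0
    refine ⟨y, ?_⟩
    have hcomp : (thetaBC R S M y).comp (p.baseChange S) = φ.comp (p.baseChange S) := by
      rw [← thetaBC_natural, hy, hx]
    refine LinearMap.ext fun v => ?_
    obtain ⟨w, hw⟩ := hpS v
    have h := LinearMap.congr_fun hcomp w
    rw [← hw]
    exact h

end Main

section Assembly

lemma dualMap_bijective_of_bijective {A F G : Type*} [CommRing A] [AddCommGroup F]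
    [AddCommGroup G] [Module A F] [Module A G] {f : F →ₗ[A] G} (hf : Bijective f) :
    Bijective f.dualMap := by
  let e := LinearEquiv.ofBijective f hf
  constructor
  · intro φ ψ h
    ext v
    obtain ⟨w, hw⟩ := hf.2 v
    rw [← hw]
    exact LinearMap.congr_fun h w
  · intro ψ
    refine ⟨ψ.comp (e.symm : G →ₗ[A] F), ?_⟩
    ext v
    rw [LinearMap.dualMap_apply, LinearMap.comp_apply]
    exact congrArg ψ (e.symm_apply_apply v)

lemma baseChange_bijective {R S N N' : Type*} [CommRing R] [CommRing S] [Algebra R S]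
    [Module.Flat R S] [AddCommGroup N] [Module R N] [AddCommGroup N'] [Module R N']
    {f : N →ₗ[R] N'} (hf : Bijective f) : Bijective (f.baseChange S) := by
  constructor
  · have h := Module.Flat.lTensor_preserves_injective_linearMap (M := S) f hf.1
    rwa [← LinearMap.baseChange_eq_ltensor] at h
  · have h := LinearMap.lTensor_surjective S hf.2
    rwa [← LinearMap.baseChange_eq_ltensor] at h

set_option maxHeartbeats 1000000 in
set_option maxRecDepth 4000 in
/-- Flat base change preserves reflexivity: if `R` is noetherian, `S` a noetherian flat
`R`-algebra, and `M` a finite reflexive `R`-module, then `S ⊗[R] M` is a reflexive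
`S`-module. -/
theorem flat_baseChange_reflexive
    (R S M : Type*) [CommRing R] [IsNoetherianRing R]
    [CommRing S] [Algebra R S] [IsNoetherianRing S] [Module.Flat R S]
    [AddCommGroup M] [Module R M] [Module.Finite R M]
    [Module.IsReflexive R M] :
    Module.IsReflexive S (S ⊗[R] M) := by
  haveI : Module.Finite R (Module.Dual R M) := ⟨IsNoetherian.noetherian ⊤⟩
  have hθM := thetaBC_bijective R S M
  have hθD := thetaBC_bijective R S (Module.Dual R M)
  have hev : Bijective (Dual.eval R M) := Module.IsReflexive.bijective_dual_eval'
  have hbc : Bijective ((Dual.eval R M).baseChange S) := baseChange_bijective hev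
  have key : (thetaBC R S M).dualMap ∘ₗ Dual.eval S (S ⊗[R] M) =
      thetaBC R S (Module.Dual R M) ∘ₗ ((Dual.eval R M).baseChange S) := by
    refine bc_ext fun m => ?_
    simp only [LinearMap.comp_apply, LinearMap.baseChange_tmul]
    refine bc_ext fun f => ?_
    rw [LinearMap.dualMap_apply, Module.Dual.eval_apply, thetaBC_tmul, thetaBC_tmul,
      Module.Dual.eval_apply]
  have hdual : Bijective ((thetaBC R S M).dualMap) := dualMap_bijective_of_bijective hθM
  have hcomp : Bijective (⇑((thetaBC R S M).dualMap) ∘ ⇑(Dual.eval S (S ⊗[R] M))) := by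
    rw [← LinearMap.coe_comp, key, LinearMap.coe_comp]
    exact hθD.comp hbc
  constructor
  constructor
  · exact Function.Injective.of_comp hcomp.injective
  · intro y
    obtain ⟨x, hx⟩ := hcomp.surjective ((thetaBC R S M).dualMap y)
    exact ⟨x, hdual.injective hx⟩

end Assembly
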